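/- Let t ≥ 1 be an integer, M ⊆ V, let σ ∈ ℝ^V be a probability vector, and let ν ∈ ℝ^V be a probability vector with ν_v = 0 for all v ∉ M. Set ξ := σ − ν and assume D^{-1/2}ξ is orthogonal to the kernel of the real symmetric matrix I − D^{1/2} P^t D^{-1/2}. Then Σ_{v∈M} ν_v² / (σ_v + π_v) ≤ 2·(1 + ξᵀ (D(I − P^t))⁺ ξ). -/

import Mathlib

open Matrix

/-- `B` is the Moore–Penrose pseudoinverse of `A`. -/
def IsMoorePenrose {n : Type*} [Fintype n] (A B : Matrix n n ℝ) : Prop :=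
  A * B * A = A ∧ B * A * B = B ∧ (A * B)ᵀ = A * B ∧ (B * A)ᵀ = B * A

lemma mp_unique {n : Type*} [Fintype n] {A B C : Matrix n n ℝ}
    (hB : IsMoorePenrose A B) (hC : IsMoorePenrose A C) : B = C := by
  obtain ⟨hB1, hB2, hB3, hB4⟩ := hB
  obtain ⟨hC1, hC2, hC3, hC4⟩ := hC
  have hAB : A * B = A * C := by
    calc A * B = (A * B)ᵀ := hB3.symm
      _ = Bᵀ * Aᵀ := transpose_mul _ _
      _ = Bᵀ * ((A * C * A)ᵀ) := by rw [hC1]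
      _ = Bᵀ * (Aᵀ * (A * C)ᵀ) := by rw [transpose_mul (A * C) A]
      _ = (Bᵀ * Aᵀ) * (A * C)ᵀ := (mul_assoc _ _ _).symm
      _ = (A * B)ᵀ * (A * C)ᵀ := by rw [← transpose_mul A B]
      _ = (A * B) * (A * C) := by rw [hB3, hC3]
      _ = (A * B * A) * C := (mul_assoc (A * B) A C).symm
      _ = A * C := by rw [hB1]
  have hBA : B * A = C * A := by
    calc B * A = (B * A)ᵀ := hB4.symm
      _ = Aᵀ * Bᵀ := transpose_mul _ _
      _ = (A * (C * A))ᵀ * Bᵀ := by rw [← mul_assoc, hC1]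
      _ = ((C * A)ᵀ * Aᵀ) * Bᵀ := by rw [transpose_mul A (C * A)]
      _ = (C * A)ᵀ * (Aᵀ * Bᵀ) := mul_assoc _ _ _
      _ = (C * A)ᵀ * (B * A)ᵀ := by rw [← transpose_mul B A]
      _ = (C * A) * (B * A) := by rw [hC4, hB4]
      _ = C * (A * B * A) := by rw [mul_assoc, ← mul_assoc A B A]
      _ = C * A := by rw [hB1]
  calc B = B * A * B := hB2.symm
    _ = B * (A * B) := mul_assoc _ _ _
    _ = B * (A * C) := by rw [hAB]
    _ = (B * A) * C := (mul_assoc _ _ _).symm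
    _ = (C * A) * C := by rw [hBA]
    _ = C := hC2

lemma mp_transpose {n : Type*} [Fintype n] {A B : Matrix n n ℝ} (hA : Aᵀ = A)
    (h : IsMoorePenrose A B) : IsMoorePenrose A Bᵀ := by
  obtain ⟨h1, h2, h3, h4⟩ := h
  have hABt : A * Bᵀ = B * A := by
    calc A * Bᵀ = Aᵀ * Bᵀ := by rw [hA]
      _ = (B * A)ᵀ := (transpose_mul B A).symm
      _ = B * A := h4
  have hBtA : Bᵀ * A = A * B := by
    calc Bᵀ * A = Bᵀ * Aᵀ := by rw [hA]
      _ = (A * B)ᵀ := (transpose_mul A B).symm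
      _ = A * B := h3
  refine ⟨?_, ?_, ?_, ?_⟩
  · have key : (A * Bᵀ * A)ᵀ = A := by
      rw [transpose_mul (A * Bᵀ) A, transpose_mul A Bᵀ, transpose_transpose, hA,
        ← mul_assoc, h1]
    calc A * Bᵀ * A = ((A * Bᵀ * A)ᵀ)ᵀ := (transpose_transpose _).symm
      _ = Aᵀ := by rw [key]
      _ = A := hA
  · have key : (Bᵀ * A * Bᵀ)ᵀ = B := by
      rw [transpose_mul (Bᵀ * A) Bᵀ, transpose_mul Bᵀ A, transpose_transpose, hA,
        ← mul_assoc, h2]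
    calc Bᵀ * A * Bᵀ = ((Bᵀ * A * Bᵀ)ᵀ)ᵀ := (transpose_transpose _).symm
      _ = Bᵀ := by rw [key]
  · rw [hABt]; exact h4
  · rw [hBtA]; exact h3

lemma pow_entry_nonneg {n : Type*} [Fintype n] [DecidableEq n] (P : Matrix n n ℝ)
    (h : ∀ v w, 0 ≤ P v w) : ∀ (t : ℕ) (v w : n), 0 ≤ (P ^ t) v w := by
  intro t
  induction t with
  | zero =>
    intro v w
    rw [pow_zero, Matrix.one_apply]
    split <;> norm_num
  | succ k ih =>
    intro v w
    rw [pow_succ, Matrix.mul_apply]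
    exact Finset.sum_nonneg fun j _ => mul_nonneg (ih v j) (h j w)

lemma pow_row_sum {n : Type*} [Fintype n] [DecidableEq n] (P : Matrix n n ℝ)
    (h : ∀ v, ∑ w, P v w = 1) : ∀ (t : ℕ) (v : n), ∑ w, (P ^ t) v w = 1 := by
  intro t
  induction t with
  | zero => intro v; simp [Matrix.one_apply]
  | succ k ih =>
    intro v
    simp only [pow_succ, Matrix.mul_apply]
    rw [Finset.sum_comm]
    calc ∑ j, ∑ w, (P ^ k) v j * P j w = ∑ j, (P ^ k) v j :=
          Finset.sum_congr rfl fun j _ => by rw [← Finset.mul_sum, h, mul_one]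
      _ = 1 := ih v

lemma pow_reversible {n : Type*} [Fintype n] [DecidableEq n] (P : Matrix n n ℝ) (π : n → ℝ)
    (h : ∀ v w, π v * P v w = π w * P w v) :
    ∀ (t : ℕ) (v w : n), π v * (P ^ t) v w = π w * (P ^ t) w v := by
  intro t
  induction t with
  | zero =>
    intro v w
    rw [pow_zero, Matrix.one_apply, Matrix.one_apply]
    by_cases hvw : v = w
    · subst hvw; rfl
    · rw [if_neg hvw, if_neg (Ne.symm hvw), mul_zero, mul_zero]
  | succ k ih =>
    intro v w
    conv_lhs => rw [pow_succ]
    conv_rhs => rw [pow_succ']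
    rw [Matrix.mul_apply, Matrix.mul_apply, Finset.mul_sum, Finset.mul_sum]
    refine Finset.sum_congr rfl fun j _ => ?_
    calc π v * ((P ^ k) v j * P j w) = (π v * (P ^ k) v j) * P j w := by ring
      _ = (π j * (P ^ k) j v) * P j w := by rw [ih]
      _ = (P ^ k) j v * (π j * P j w) := by ring
      _ = (P ^ k) j v * (π w * P w j) := by rw [h]
      _ = π w * (P w j * (P ^ k) j v) := by ring

lemma quad_bound {n : Type*} [Fintype n] (π : n → ℝ) (Q : Matrix n n ℝ)
    (hπ : ∀ v, 0 ≤ π v) (hQ : ∀ v w, 0 ≤ Q v w) (hrow : ∀ v, ∑ w, Q v w = 1)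
    (hsym : ∀ v w, π v * Q v w = π w * Q w v) (x : n → ℝ) :
    |∑ v, ∑ w, π v * Q v w * (x v * x w)| ≤ ∑ v, π v * x v ^ 2 := by
  have e1 : ∑ v, ∑ w, π v * Q v w * x v ^ 2 = ∑ v, π v * x v ^ 2 := by
    refine Finset.sum_congr rfl fun v _ => ?_
    calc ∑ w, π v * Q v w * x v ^ 2 = ∑ w, (π v * x v ^ 2) * Q v w :=
          Finset.sum_congr rfl fun w _ => by ring
      _ = (π v * x v ^ 2) * ∑ w, Q v w := (Finset.mul_sum _ _ _).symm
      _ = π v * x v ^ 2 := by rw [hrow, mul_one]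
  have e2 : ∑ v, ∑ w, π v * Q v w * x w ^ 2 = ∑ v, π v * x v ^ 2 := by
    calc ∑ v, ∑ w, π v * Q v w * x w ^ 2 = ∑ v, ∑ w, π w * Q w v * x w ^ 2 :=
          Finset.sum_congr rfl fun v _ => Finset.sum_congr rfl fun w _ => by rw [hsym]
      _ = ∑ w, ∑ v, π w * Q w v * x w ^ 2 := Finset.sum_comm
      _ = ∑ w, π w * x w ^ 2 := by
          refine Finset.sum_congr rfl fun w _ => ?_
          calc ∑ v, π w * Q w v * x w ^ 2 = ∑ v, (π w * x w ^ 2) * Q w v :=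
                Finset.sum_congr rfl fun v _ => by ring
            _ = (π w * x w ^ 2) * ∑ v, Q w v := (Finset.mul_sum _ _ _).symm
            _ = π w * x w ^ 2 := by rw [hrow, mul_one]
  have expand : ∀ ε : ℝ, ∑ v, ∑ w, π v * Q v w * (x v - ε * x w) ^ 2
      = (∑ v, ∑ w, π v * Q v w * x v ^ 2) + ε ^ 2 * (∑ v, ∑ w, π v * Q v w * x w ^ 2)
        - 2 * ε * (∑ v, ∑ w, π v * Q v w * (x v * x w)) := by
    intro ε
    rw [Finset.mul_sum, Finset.mul_sum, ← Finset.sum_add_distrib, ← Finset.sum_sub_distrib]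
    refine Finset.sum_congr rfl fun v _ => ?_
    rw [Finset.mul_sum, Finset.mul_sum, ← Finset.sum_add_distrib, ← Finset.sum_sub_distrib]
    exact Finset.sum_congr rfl fun w _ => by ring
  have key : ∀ ε : ℝ, 0 ≤ ∑ v, ∑ w, π v * Q v w * (x v - ε * x w) ^ 2 := fun ε =>
    Finset.sum_nonneg fun v _ => Finset.sum_nonneg fun w _ =>
      mul_nonneg (mul_nonneg (hπ v) (hQ v w)) (sq_nonneg _)
  have h1 := key 1
  have h2 := key (-1)
  rw [expand 1, e1, e2] at h1
  rw [expand (-1), e1, e2] at h2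
  rw [abs_le]
  constructor
  · nlinarith [h2]
  · nlinarith [h1]

lemma sym_dot {n : Type*} [Fintype n] (L : Matrix n n ℝ) (hL : Lᵀ = L) (a b : n → ℝ) :
    a ⬝ᵥ (L *ᵥ b) = b ⬝ᵥ (L *ᵥ a) := by
  calc a ⬝ᵥ (L *ᵥ b) = (a ᵥ* L) ⬝ᵥ b := dotProduct_mulVec _ _ _
    _ = (a ᵥ* Lᵀ) ⬝ᵥ b := by rw [hL]
    _ = (L *ᵥ a) ⬝ᵥ b := by rw [vecMul_transpose]
    _ = b ⬝ᵥ (L *ᵥ a) := dotProduct_comm _ _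

lemma psd_cauchy {n : Type*} [Fintype n] (L : Matrix n n ℝ) (hL : Lᵀ = L)
    (hpsd : ∀ x, 0 ≤ x ⬝ᵥ (L *ᵥ x)) (u y : n → ℝ) :
    (u ⬝ᵥ (L *ᵥ y)) ^ 2 ≤ (u ⬝ᵥ (L *ᵥ u)) * (y ⬝ᵥ (L *ᵥ y)) := by
  have key : ∀ r : ℝ,
      0 ≤ (y ⬝ᵥ (L *ᵥ y)) * (r * r) + (2 * (u ⬝ᵥ (L *ᵥ y))) * r + u ⬝ᵥ (L *ᵥ u) := by
    intro r
    have h := hpsd (u + r • y)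
    have e : (u + r • y) ⬝ᵥ (L *ᵥ (u + r • y))
        = (y ⬝ᵥ (L *ᵥ y)) * (r * r) + (2 * (u ⬝ᵥ (L *ᵥ y))) * r + u ⬝ᵥ (L *ᵥ u) := by
      simp only [mulVec_add, mulVec_smul, dotProduct_add, add_dotProduct, dotProduct_smul,
        smul_dotProduct, smul_eq_mul]
      rw [sym_dot L hL y u]
      ring
    rw [e] at h
    exact h
  have hd := discrim_le_zero key
  simp only [discrim] at hd
  nlinarith [hd]

set_option maxHeartbeats 1000000 in
/-- For an irreducible, reversible Markov chain `P` with stationary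
distribution `π`, an integer `t ≥ 1`, a marked set `M ⊆ V`, a probability vector `σ` and a
probability vector `ν` supported on `M`, with `ξ := σ - ν` such that `D^{-1/2} ξ` is
orthogonal to the kernel of `I - D^{1/2} P^t D^{-1/2}`, we have
`Σ_{v ∈ M} ν_v² / (σ_v + π_v) ≤ 2 (1 + ξᵀ (D(I - P^t))⁺ ξ)`. -/
theorem checking_cost_vs_effective_resistance
    {V : Type*} [Fintype V] [DecidableEq V] [Nonempty V]
    (P : Matrix V V ℝ) (π : V → ℝ)
    (hPnonneg : ∀ v w, 0 ≤ P v w) (hProw : ∀ v, ∑ w, P v w = 1)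
    (hirr : ∀ v w, ∃ t : ℕ, 1 ≤ t ∧ 0 < (P ^ t) v w)
    (hπpos : ∀ v, 0 < π v) (hπsum : ∑ v, π v = 1)
    (hrev : ∀ v w, π v * P v w = π w * P w v)
    (t : ℕ) (ht : 1 ≤ t)
    (M : Finset V)
    (σ ν : V → ℝ)
    (hσnonneg : ∀ v, 0 ≤ σ v) (hσsum : ∑ v, σ v = 1)
    (hνnonneg : ∀ v, 0 ≤ ν v) (hνsum : ∑ v, ν v = 1)
    (hνsupp : ∀ v ∉ M, ν v = 0)
    (ξ : V → ℝ) (hξ : ξ = σ - ν)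
    (hker : ∀ y : V → ℝ,
      ((1 : Matrix V V ℝ) -
          diagonal (fun v => Real.sqrt (π v)) * (P ^ t) *
            diagonal (fun v => (Real.sqrt (π v))⁻¹)) *ᵥ y = 0 →
      (fun v => (Real.sqrt (π v))⁻¹ * ξ v) ⬝ᵥ y = 0)
    (Ltplus : Matrix V V ℝ)
    (hLtplus : IsMoorePenrose (diagonal π * (1 - P ^ t)) Ltplus) :
    ∑ v ∈ M, (ν v) ^ 2 / (σ v + π v) ≤ 2 * (1 + ξ ⬝ᵥ (Ltplus *ᵥ ξ)) := by
  set Q : Matrix V V ℝ := P ^ t with hQdef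
  set L : Matrix V V ℝ := diagonal π * (1 - Q) with hLdef
  have hQnn : ∀ v w, 0 ≤ Q v w := pow_entry_nonneg P hPnonneg t
  have hQrow : ∀ v, ∑ w, Q v w = 1 := pow_row_sum P hProw t
  have hQrev : ∀ v w, π v * Q v w = π w * Q w v := pow_reversible P π hrev t
  have hLmul : ∀ x : V → ℝ, L *ᵥ x = fun v => π v * (x v - (Q *ᵥ x) v) := by
    intro x
    funext v
    rw [hLdef, ← mulVec_mulVec, sub_mulVec, one_mulVec, mulVec_diagonal]
    rfl
  have hqform : ∀ x : V → ℝ, x ⬝ᵥ (L *ᵥ x)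
      = (∑ v, π v * x v ^ 2) - ∑ v, ∑ w, π v * Q v w * (x v * x w) := by
    intro x
    rw [hLmul x]
    simp only [dotProduct]
    rw [← Finset.sum_sub_distrib]
    refine Finset.sum_congr rfl fun v _ => ?_
    simp only [mulVec, dotProduct]
    have h : ∑ w, π v * Q v w * (x v * x w) = x v * (π v * ∑ w, Q v w * x w) := by
      rw [Finset.mul_sum, Finset.mul_sum]
      exact Finset.sum_congr rfl fun w _ => by ring
    rw [h]
    ring
  have hPSD : ∀ x : V → ℝ, 0 ≤ x ⬝ᵥ (L *ᵥ x) := by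
    intro x
    rw [hqform]
    have h := quad_bound π Q (fun v => (hπpos v).le) hQnn hQrow hQrev x
    linarith [(abs_le.mp h).2]
  have hq2 : ∀ x : V → ℝ, x ⬝ᵥ (L *ᵥ x) ≤ 2 * ∑ v, π v * x v ^ 2 := by
    intro x
    rw [hqform]
    have h := quad_bound π Q (fun v => (hπpos v).le) hQnn hQrow hQrev x
    linarith [(abs_le.mp h).1]
  have hLapp : ∀ a b, L a b = π a * ((1 : Matrix V V ℝ) a b - Q a b) := by
    intro a b
    rw [hLdef, Matrix.diagonal_mul, Matrix.sub_apply]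
  have hLsym : Lᵀ = L := by
    ext a b
    rw [transpose_apply, hLapp, hLapp, Matrix.one_apply, Matrix.one_apply]
    by_cases hab : a = b
    · subst hab; rfl
    · rw [if_neg hab, if_neg (Ne.symm hab)]
      simp only [zero_sub, mul_neg, neg_inj]
      exact (hQrev a b).symm
  have hBsym : Ltplusᵀ = Ltplus := mp_unique (mp_transpose hLsym hLtplus) hLtplus
  have hcomm : L * Ltplus = Ltplus * L := by
    calc L * Ltplus = (L * Ltplus)ᵀ := hLtplus.2.2.1.symm
      _ = Ltplusᵀ * Lᵀ := transpose_mul _ _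
      _ = Ltplus * L := by rw [hBsym, hLsym]
  have hkerL : ∀ z : V → ℝ, L *ᵥ z = 0 → ξ ⬝ᵥ z = 0 := by
    intro z hz
    have hsq : ∀ v, Real.sqrt (π v) ≠ 0 := fun v => Real.sqrt_ne_zero'.mpr (hπpos v)
    have hfix : Q *ᵥ z = z := by
      funext v
      have h : π v * (z v - (Q *ᵥ z) v) = 0 := by
        have h0 := congrFun hz v
        rw [hLmul z] at h0
        simpa using h0
      rcases mul_eq_zero.mp h with h' | h'
      · exact absurd h' (ne_of_gt (hπpos v))
      · linarith [sub_eq_zero.mp h']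
    have hy : ((1 : Matrix V V ℝ) -
        diagonal (fun v => Real.sqrt (π v)) * Q * diagonal (fun v => (Real.sqrt (π v))⁻¹)) *ᵥ
          (fun v => Real.sqrt (π v) * z v) = 0 := by
      rw [sub_mulVec, one_mulVec, ← mulVec_mulVec]
      have h1 : diagonal (fun v => (Real.sqrt (π v))⁻¹) *ᵥ (fun v => Real.sqrt (π v) * z v)
          = z := by
        funext v
        rw [mulVec_diagonal, ← mul_assoc, inv_mul_cancel₀ (hsq v), one_mul]
      rw [h1, ← mulVec_mulVec, hfix]
      funext v
      simp [mulVec_diagonal]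
    have h0 := hker (fun v => Real.sqrt (π v) * z v) hy
    calc ξ ⬝ᵥ z
        = (fun v => (Real.sqrt (π v))⁻¹ * ξ v) ⬝ᵥ (fun v => Real.sqrt (π v) * z v) := by
          simp only [dotProduct]
          refine Finset.sum_congr rfl fun v _ => ?_
          have key : (Real.sqrt (π v))⁻¹ * ξ v * (Real.sqrt (π v) * z v)
              = (Real.sqrt (π v) * (Real.sqrt (π v))⁻¹) * (ξ v * z v) := by ring
          rw [key, mul_inv_cancel₀ (hsq v), one_mul]
      _ = 0 := h0
  have hrangeξ : (L * Ltplus) *ᵥ ξ = ξ := by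
    set z : V → ℝ := ξ - (L * Ltplus) *ᵥ ξ with hzdef
    have hLz : L *ᵥ z = 0 := by
      rw [hzdef, mulVec_sub, mulVec_mulVec]
      have h : L * (L * Ltplus) = L := by rw [hcomm, ← mul_assoc, hLtplus.1]
      rw [h, sub_self]
    have hz1 : ξ ⬝ᵥ z = 0 := hkerL z hLz
    have hz2 : ((L * Ltplus) *ᵥ ξ) ⬝ᵥ z = 0 := by
      calc ((L * Ltplus) *ᵥ ξ) ⬝ᵥ z = z ⬝ᵥ ((L * Ltplus) *ᵥ ξ) := dotProduct_comm _ _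
        _ = ξ ⬝ᵥ ((L * Ltplus) *ᵥ z) := sym_dot _ hLtplus.2.2.1 z ξ
        _ = ξ ⬝ᵥ ((Ltplus * L) *ᵥ z) := by rw [hcomm]
        _ = ξ ⬝ᵥ (Ltplus *ᵥ (L *ᵥ z)) := by rw [← mulVec_mulVec]
        _ = 0 := by rw [hLz, mulVec_zero, dotProduct_zero]
    have hzz : z ⬝ᵥ z = 0 := by
      nth_rewrite 1 [hzdef]
      rw [sub_dotProduct, hz1, hz2, sub_zero]
    have hz0 : z = 0 := by
      funext v
      have hsum : ∑ v, z v * z v = 0 := hzz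
      have h := (Finset.sum_eq_zero_iff_of_nonneg
        (fun i _ => mul_self_nonneg (z i))).mp hsum v (Finset.mem_univ v)
      exact mul_self_eq_zero.mp h
    have h5 : ξ - (L * Ltplus) *ᵥ ξ = 0 := by rw [← hzdef]; exact hz0
    exact (sub_eq_zero.mp h5).symm
  have hu : L *ᵥ (Ltplus *ᵥ ξ) = ξ := by rw [mulVec_mulVec]; exact hrangeξ
  set R := ξ ⬝ᵥ (Ltplus *ᵥ ξ) with hRdef
  have hRq : (Ltplus *ᵥ ξ) ⬝ᵥ (L *ᵥ (Ltplus *ᵥ ξ)) = R := by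
    rw [hu, dotProduct_comm]
  have hRnn : 0 ≤ R := hRq ▸ hPSD (Ltplus *ᵥ ξ)
  -- scalar part
  have hpos : ∀ v, 0 < σ v + π v := by
    intro v
    have := hσnonneg v
    have := hπpos v
    linarith
  set y₀ : V → ℝ := fun v => ν v / (σ v + π v) with hy₀def
  have hSsum : ∑ v ∈ M, (ν v) ^ 2 / (σ v + π v) = ∑ v, (ν v) ^ 2 / (σ v + π v) :=
    Finset.sum_subset (Finset.subset_univ M) (fun v _ hv => by rw [hνsupp v hv]; simp)
  rw [hSsum]
  set S := ∑ v, (ν v) ^ 2 / (σ v + π v) with hSdef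
  set b := ∑ v, π v * y₀ v ^ 2 with hbdef
  set c := ∑ v, σ v * y₀ v ^ 2 with hcdef
  have hSnn : 0 ≤ S := Finset.sum_nonneg fun v _ => div_nonneg (sq_nonneg _) (hpos v).le
  have hbnn : 0 ≤ b := Finset.sum_nonneg fun v _ => mul_nonneg (hπpos v).le (sq_nonneg _)
  have hcnn : 0 ≤ c := Finset.sum_nonneg fun v _ => mul_nonneg (hσnonneg v) (sq_nonneg _)
  have hcb : c + b = S := by
    rw [hcdef, hbdef, hSdef, ← Finset.sum_add_distrib]
    refine Finset.sum_congr rfl fun v _ => ?_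
    simp only [hy₀def]
    have hne := (hpos v).ne'
    field_simp
  have hνy : ν ⬝ᵥ y₀ = S := by
    rw [hSdef]
    simp only [dotProduct, hy₀def]
    exact Finset.sum_congr rfl fun v _ => by rw [pow_two, mul_div_assoc]
  have hσy : σ ⬝ᵥ y₀ ≤ Real.sqrt c := by
    have hcs := Finset.sum_mul_sq_le_sq_mul_sq Finset.univ
      (fun v => Real.sqrt (σ v)) (fun v => Real.sqrt (σ v) * y₀ v)
    have e1 : ∀ v, Real.sqrt (σ v) * (Real.sqrt (σ v) * y₀ v) = σ v * y₀ v := fun v => by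
      rw [← mul_assoc, Real.mul_self_sqrt (hσnonneg v)]
    have e2 : ∀ v, Real.sqrt (σ v) ^ 2 = σ v := fun v => Real.sq_sqrt (hσnonneg v)
    have e3 : ∀ v, (Real.sqrt (σ v) * y₀ v) ^ 2 = σ v * y₀ v ^ 2 := fun v => by
      rw [mul_pow, e2]
    simp only [e1, e2, e3] at hcs
    rw [hσsum, one_mul, ← hcdef] at hcs
    have hdot : σ ⬝ᵥ y₀ = ∑ v, σ v * y₀ v := rfl
    calc σ ⬝ᵥ y₀ ≤ |σ ⬝ᵥ y₀| := le_abs_self _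
      _ = Real.sqrt ((σ ⬝ᵥ y₀) ^ 2) := (Real.sqrt_sq_eq_abs _).symm
      _ ≤ Real.sqrt c := Real.sqrt_le_sqrt (by rw [hdot]; exact hcs)
  have hξy : ξ ⬝ᵥ y₀ = σ ⬝ᵥ y₀ - S := by rw [hξ, sub_dotProduct, hνy]
  have hq2y : y₀ ⬝ᵥ (L *ᵥ y₀) ≤ 2 * b := hq2 y₀
  have hCS : (ξ ⬝ᵥ y₀) ^ 2 ≤ R * (2 * b) := by
    have h1 : ξ ⬝ᵥ y₀ = (Ltplus *ᵥ ξ) ⬝ᵥ (L *ᵥ y₀) := by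
      calc ξ ⬝ᵥ y₀ = (L *ᵥ (Ltplus *ᵥ ξ)) ⬝ᵥ y₀ := by rw [hu]
        _ = y₀ ⬝ᵥ (L *ᵥ (Ltplus *ᵥ ξ)) := dotProduct_comm _ _
        _ = (Ltplus *ᵥ ξ) ⬝ᵥ (L *ᵥ y₀) := sym_dot L hLsym y₀ (Ltplus *ᵥ ξ)
    rw [h1]
    calc ((Ltplus *ᵥ ξ) ⬝ᵥ (L *ᵥ y₀)) ^ 2
        ≤ ((Ltplus *ᵥ ξ) ⬝ᵥ (L *ᵥ (Ltplus *ᵥ ξ))) * (y₀ ⬝ᵥ (L *ᵥ y₀)) :=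
          psd_cauchy L hLsym hPSD _ _
      _ = R * (y₀ ⬝ᵥ (L *ᵥ y₀)) := by rw [hRq]
      _ ≤ R * (2 * b) := mul_le_mul_of_nonneg_left hq2y hRnn
  have hstep : S ≤ Real.sqrt c + Real.sqrt (R * (2 * b)) := by
    have h2 : -(ξ ⬝ᵥ y₀) ≤ Real.sqrt (R * (2 * b)) := by
      calc -(ξ ⬝ᵥ y₀) ≤ |ξ ⬝ᵥ y₀| := neg_le_abs _
        _ = Real.sqrt ((ξ ⬝ᵥ y₀) ^ 2) := (Real.sqrt_sq_eq_abs _).symm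
        _ ≤ Real.sqrt (R * (2 * b)) := Real.sqrt_le_sqrt hCS
    linarith [hσy, h2, hξy]
  have hr2 : Real.sqrt (2 * R) ^ 2 = 2 * R := Real.sq_sqrt (by linarith)
  have hw2 : Real.sqrt b ^ 2 = b := Real.sq_sqrt hbnn
  have hp2 : Real.sqrt c ^ 2 = c := Real.sq_sqrt hcnn
  have hsplit : Real.sqrt (R * (2 * b)) = Real.sqrt (2 * R) * Real.sqrt b := by
    rw [show R * (2 * b) = (2 * R) * b from by ring, Real.sqrt_mul (by linarith) b]
  have hfin : S ≤ 1 + 2 * R := by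
    rcases eq_or_lt_of_le hSnn with h0 | hSpos
    · linarith
    · have hle : S ≤ Real.sqrt c + Real.sqrt (2 * R) * Real.sqrt b := by
        rw [← hsplit]; exact hstep
      have h2 : S ^ 2 ≤ (Real.sqrt c + Real.sqrt (2 * R) * Real.sqrt b) ^ 2 :=
        pow_le_pow_left₀ hSnn hle 2
      have hpr : (Real.sqrt c * Real.sqrt (2 * R)) ^ 2 = c * (2 * R) := by
        rw [mul_pow, hp2, hr2]
      have h3 : (Real.sqrt c + Real.sqrt (2 * R) * Real.sqrt b) ^ 2 ≤ S * (1 + 2 * R) := by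
        nlinarith [sq_nonneg (Real.sqrt c * Real.sqrt (2 * R) - Real.sqrt b), hp2, hw2, hr2,
          hcb, hpr]
      have h4 : S ^ 2 ≤ S * (1 + 2 * R) := le_trans h2 h3
      have h5 : S * S ≤ S * (1 + 2 * R) := by rw [← pow_two]; exact h4
      exact le_of_mul_le_mul_left h5 hSpos
  linarith [hfin, hRnn]
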